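/- For fixed reals x₁, x₂, the function g(ρ) = (x₁²+x₂²-2ρx₁x₂)/(2(1-ρ²)) on (-1,1) is convex: its second derivative equals ((1+3ρ²)x₁² - 2ρ(ρ²+3)x₁x₂ + (1+3ρ²)x₂²)/(1-ρ²)³, which is nonnegative for all ρ ∈ (-1,1). -/

import Mathlib

open Set

theorem exponent_convex (x₁ x₂ : ℝ) :
    ConvexOn ℝ (Set.Ioo (-1 : ℝ) 1)
      (fun ρ : ℝ => (x₁ ^ 2 + x₂ ^ 2 - 2 * ρ * x₁ * x₂) / (2 * (1 - ρ ^ 2))) ∧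
    ∀ ρ ∈ Set.Ioo (-1 : ℝ) 1,
      deriv (deriv (fun ρ : ℝ => (x₁ ^ 2 + x₂ ^ 2 - 2 * ρ * x₁ * x₂) / (2 * (1 - ρ ^ 2)))) ρ =
        ((1 + 3 * ρ ^ 2) * x₁ ^ 2 - 2 * ρ * (ρ ^ 2 + 3) * x₁ * x₂ + (1 + 3 * ρ ^ 2) * x₂ ^ 2) /
          (1 - ρ ^ 2) ^ 3 ∧
      0 ≤ ((1 + 3 * ρ ^ 2) * x₁ ^ 2 - 2 * ρ * (ρ ^ 2 + 3) * x₁ * x₂ + (1 + 3 * ρ ^ 2) * x₂ ^ 2) /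
          (1 - ρ ^ 2) ^ 3 := by
  set g : ℝ → ℝ := fun ρ => (x₁ ^ 2 + x₂ ^ 2 - 2 * ρ * x₁ * x₂) / (2 * (1 - ρ ^ 2)) with hg
  set g1 : ℝ → ℝ := fun ρ =>
    (2 * (x₁ ^ 2 + x₂ ^ 2) * ρ - 2 * x₁ * x₂ * (1 + ρ ^ 2)) / (2 * (1 - ρ ^ 2) ^ 2) with hg1
  have hne : ∀ ρ : ℝ, ρ ∈ Ioo (-1 : ℝ) 1 → (0 : ℝ) < 1 - ρ ^ 2 := by
    rintro ρ ⟨h1, h2⟩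
    nlinarith
  have hd1 : ∀ ρ : ℝ, ρ ∈ Ioo (-1 : ℝ) 1 → HasDerivAt g (g1 ρ) ρ := by
    intro ρ hρ
    have h0 := hne ρ hρ
    have h : HasDerivAt (fun x : ℝ => x₁ ^ 2 + x₂ ^ 2 - 2 * x * x₁ * x₂) (-(2 * x₁ * x₂)) ρ := by
      have := (((hasDerivAt_id ρ).const_mul (2 : ℝ)).mul_const x₁).mul_const x₂
      simpa [Pi.sub_def] using (hasDerivAt_const ρ (x₁ ^ 2 + x₂ ^ 2)).sub this
    have hden : HasDerivAt (fun x : ℝ => 2 * (1 - x ^ 2)) (2 * (0 - 2 * ρ)) ρ := by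
      have := ((hasDerivAt_const ρ (1 : ℝ)).sub (hasDerivAt_pow 2 ρ)).const_mul (2 : ℝ)
      simpa using this
    have hD : (2 : ℝ) * (1 - ρ ^ 2) ≠ 0 := by positivity
    have := h.fun_div hden hD
    refine this.congr_deriv ?_
    rw [hg1]
    field_simp [hg1]
    ring
  have hd2 : ∀ ρ : ℝ, ρ ∈ Ioo (-1 : ℝ) 1 → HasDerivAt g1
      (((1 + 3 * ρ ^ 2) * x₁ ^ 2 - 2 * ρ * (ρ ^ 2 + 3) * x₁ * x₂ + (1 + 3 * ρ ^ 2) * x₂ ^ 2) /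
          (1 - ρ ^ 2) ^ 3) ρ := by
    intro ρ hρ
    have h0 := hne ρ hρ
    have hnum : HasDerivAt (fun x : ℝ => 2 * (x₁ ^ 2 + x₂ ^ 2) * x - 2 * x₁ * x₂ * (1 + x ^ 2))
        (2 * (x₁ ^ 2 + x₂ ^ 2) - 2 * x₁ * x₂ * (2 * ρ)) ρ := by
      have h1 := (hasDerivAt_id ρ).const_mul (2 * (x₁ ^ 2 + x₂ ^ 2))
      have h2 := ((hasDerivAt_pow 2 ρ).const_add 1).const_mul (2 * x₁ * x₂)
      simpa [Pi.sub_def] using h1.sub h2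
    have hden : HasDerivAt (fun x : ℝ => 2 * (1 - x ^ 2) ^ 2)
        (2 * (2 * (1 - ρ ^ 2) * (0 - 2 * ρ))) ρ := by
      have h2 := (hasDerivAt_const ρ (1 : ℝ)).sub (hasDerivAt_pow 2 ρ)
      have := (h2.pow 2).const_mul (2 : ℝ)
      simp at this ⊢
      convert this using 1
    have hD : (2 : ℝ) * (1 - ρ ^ 2) ^ 2 ≠ 0 := by positivity
    have := hnum.fun_div hden hD
    refine this.congr_deriv ?_
    field_simp [hg1]
    ring
  have hopen : IsOpen (Ioo (-1 : ℝ) 1) := isOpen_Ioo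
  have hderiv_eq : ∀ ρ ∈ Ioo (-1 : ℝ) 1, deriv g ρ = g1 ρ := fun ρ hρ => (hd1 ρ hρ).deriv
  have hd2' : ∀ ρ : ℝ, ρ ∈ Ioo (-1 : ℝ) 1 → deriv (deriv g) ρ =
      ((1 + 3 * ρ ^ 2) * x₁ ^ 2 - 2 * ρ * (ρ ^ 2 + 3) * x₁ * x₂ + (1 + 3 * ρ ^ 2) * x₂ ^ 2) /
          (1 - ρ ^ 2) ^ 3 := by
    intro ρ hρ
    have hev : deriv g =ᶠ[nhds ρ] g1 :=
      Filter.eventuallyEq_of_mem (hopen.mem_nhds hρ) hderiv_eq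
    rw [hev.deriv_eq]
    exact (hd2 ρ hρ).deriv
  have hnonneg : ∀ ρ : ℝ, ρ ∈ Ioo (-1 : ℝ) 1 →
      0 ≤ ((1 + 3 * ρ ^ 2) * x₁ ^ 2 - 2 * ρ * (ρ ^ 2 + 3) * x₁ * x₂ + (1 + 3 * ρ ^ 2) * x₂ ^ 2) /
          (1 - ρ ^ 2) ^ 3 := by
    intro ρ hρ
    obtain ⟨h1, h2⟩ := hρ
    have h0 := hne ρ ⟨h1, h2⟩
    apply div_nonneg
    · nlinarith [mul_nonneg (mul_nonneg (mul_nonneg (by linarith : (0:ℝ) ≤ 1 - ρ) (by linarith : (0:ℝ) ≤ 1 - ρ)) (by linarith : (0:ℝ) ≤ 1 - ρ)) (sq_nonneg (x₁ + x₂)), mul_nonneg (mul_nonneg (mul_nonneg (by linarith : (0:ℝ) ≤ 1 + ρ) (by linarith : (0:ℝ) ≤ 1 + ρ)) (by linarith : (0:ℝ) ≤ 1 + ρ)) (sq_nonneg (x₁ - x₂))]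
    · positivity
  constructor
  · apply convexOn_of_deriv2_nonneg (convex_Ioo _ _)
    · intro ρ hρ
      exact ((hd1 ρ hρ).differentiableAt).continuousAt.continuousWithinAt
    · intro ρ hρ
      rw [interior_Ioo] at hρ
      exact (hd1 ρ hρ).differentiableAt.differentiableWithinAt
    · intro ρ hρ
      rw [interior_Ioo] at hρ
      have hev : deriv g =ᶠ[nhds ρ] g1 :=
        Filter.eventuallyEq_of_mem (hopen.mem_nhds hρ) hderiv_eq
      exact (hev.differentiableAt_iff.mpr (hd2 ρ hρ).differentiableAt).differentiableWithinAt
    · intro ρ hρ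
      rw [interior_Ioo] at hρ
      show 0 ≤ deriv^[2] g ρ
      rw [Function.iterate_succ, Function.iterate_one, Function.comp_apply, hd2' ρ hρ]
      exact hnonneg ρ hρ
  · intro ρ hρ
    exact ⟨hd2' ρ hρ, hnonneg ρ hρ⟩
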